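/- For any p ∈ H^n and any p₁, p₂ ∈ H^n with z_{p₁} = z_{p₂}, one has d(p,q) ≤ max(d(p,p₁), d(p,p₂)) for all q on the vertical segment L_{p₁,p₂} joining p₁ to p₂. -/

import Mathlib

open scoped Real ENNReal
open MeasureTheory

noncomputable section

/-- The Heisenberg group `ℍⁿ`, identified with `ℂⁿ × ℝ` (with the Euclidean `ℓ²` norm on
the `ℂⁿ` factor). -/
abbrev Heis (n : ℕ) : Type := EuclideanSpace ℂ (Fin n) × ℝ

/-- Borel σ-algebra on `ℂⁿ`. -/
instance (n : ℕ) : MeasurableSpace (EuclideanSpace ℂ (Fin n)) := borel _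

instance (n : ℕ) : BorelSpace (EuclideanSpace ℂ (Fin n)) := ⟨rfl⟩

/-- Lebesgue measure on `ℂⁿ`. -/
instance (n : ℕ) : MeasureSpace (EuclideanSpace ℂ (Fin n)) :=
  ⟨Measure.map ((WithLp.equiv 2 (Fin n → ℂ)).symm) volume⟩

namespace Heis

/-- The Hermitian product `z ⬝ conj w = ∑ zⱼ conj(wⱼ)`. -/
def herm {n : ℕ} (z w : EuclideanSpace ℂ (Fin n)) : ℂ :=
  ∑ j, z j * (starRingEnd ℂ) (w j)

/-- The Heisenberg group law `[z,t]·[z',t'] = [z+z', t+t'+2 Im (z ⬝ conj z')]`. -/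
def mul {n : ℕ} (p q : Heis n) : Heis n :=
  (p.1 + q.1, p.2 + q.2 + 2 * (herm p.1 q.1).im)

/-- Dilations `δ_λ [z,t] = [λ z, λ² t]`. -/
def dilation {n : ℕ} (l : ℝ) (p : Heis n) : Heis n := (l • p.1, l ^ 2 * p.2)

/-- A `C¹` horizontal curve in the Heisenberg group: at every point the tangent vector lies
in the horizontal subbundle spanned by the left-invariant fields
`X_j = ∂_{x_j} + 2 y_j ∂_t`, `Y_j = ∂_{y_j} - 2 x_j ∂_t`, which amounts to
`t'(s) = 2 Im (z(s) ⬝ conj z'(s))`. -/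
structure HorizCurve (n : ℕ) where
  z : ℝ → EuclideanSpace ℂ (Fin n)
  t : ℝ → ℝ
  z' : ℝ → EuclideanSpace ℂ (Fin n)
  hz : ∀ s : ℝ, HasDerivAt z (z' s) s
  ht : ∀ s : ℝ, HasDerivAt t (2 * (herm (z s) (z' s)).im) s
  hz' : Continuous z'

/-- The sub-Riemannian length of a horizontal curve (the metric `g` makes the horizontal
frame orthonormal, so the length is the integral of the Euclidean norm of `z'`). -/
def HorizCurve.length {n : ℕ} (γ : HorizCurve n) : ℝ :=
  ∫ s in (0:ℝ)..1, ‖γ.z' s‖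

/-- The Carnot–Carathéodory distance: the infimum of lengths of horizontal curves
joining `p` to `q`. -/
def ccDist {n : ℕ} (p q : Heis n) : ℝ :=
  sInf { L : ℝ | ∃ γ : HorizCurve n, γ.z 0 = p.1 ∧ γ.t 0 = p.2 ∧
      γ.z 1 = q.1 ∧ γ.t 1 = q.2 ∧ L = γ.length }

/-- Open CC-ball. -/
def ccBall {n : ℕ} (p : Heis n) (r : ℝ) : Set (Heis n) := { q | ccDist p q < r }

/-- Closed CC-ball. -/
def ccClosedBall {n : ℕ} (p : Heis n) (r : ℝ) : Set (Heis n) := { q | ccDist p q ≤ r }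

/-- CC-diameter of a set. -/
def ccDiam {n : ℕ} (F : Set (Heis n)) : ℝ :=
  sSup { r : ℝ | ∃ p ∈ F, ∃ q ∈ F, r = ccDist p q }

/-- A set is CC-bounded if the pairwise CC-distances of its points are bounded. -/
def ccBounded {n : ℕ} (F : Set (Heis n)) : Prop :=
  ∃ M : ℝ, ∀ p ∈ F, ∀ q ∈ F, ccDist p q ≤ M

/-- The vertical segment joining two points with the same `ℂⁿ`-component. -/
def vseg {n : ℕ} (p q : Heis n) : Set (Heis n) :=
  { x | x.1 = p.1 ∧ x.2 ∈ Set.uIcc p.2 q.2 }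

/-- The `t`-convex hull of a set. -/
def tco {n : ℕ} (F : Set (Heis n)) : Set (Heis n) :=
  { x | ∃ p₁ ∈ F, ∃ p₂ ∈ F, p₁.1 = p₂.1 ∧ x ∈ vseg p₁ p₂ }

/-- A set is `t`-convex if it contains the vertical segment joining any two of its points
having the same `ℂⁿ`-component. -/
def TConvex {n : ℕ} (E : Set (Heis n)) : Prop :=
  ∀ p ∈ E, ∀ q ∈ E, p.1 = q.1 → vseg p q ⊆ E

/-- The rotation `r_θ [z,t] = [(e^{iθ₁} z₁, …, e^{iθₙ} zₙ), t]`. -/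
def rot {n : ℕ} (θ : Fin n → ℝ) (p : Heis n) : Heis n :=
  ((WithLp.equiv 2 (Fin n → ℂ)).symm fun j => Complex.exp ((θ j : ℂ) * Complex.I) * p.1 j,
    p.2)

/-- Rotationally invariant sets: the class `𝓡`. -/
def RotInvariant {n : ℕ} (F : Set (Heis n)) : Prop :=
  ∀ θ : Fin n → ℝ, rot θ '' F ⊆ F

/-- The reflection `σ [z,t] = [conj z, t]`. -/
def sigmaRefl {n : ℕ} (p : Heis n) : Heis n :=
  ((WithLp.equiv 2 (Fin n → ℂ)).symm fun j => (starRingEnd ℂ) (p.1 j), p.2)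

/-- The Steiner symmetrization of a set with respect to the `ℂⁿ`-plane. -/
def steiner {n : ℕ} (F : Set (Heis n)) : Set (Heis n) :=
  { x | x.1 ∈ Prod.fst '' F ∧
      2 * |x.2| ≤ (volume { s : ℝ | ((x.1, s) : Heis n) ∈ F }).toReal }

/-- The isodiametric constant `C_I`. -/
def CI (n : ℕ) : ℝ :=
  sSup { x : ℝ | ∃ F : Set (Heis n), ccBounded F ∧ 0 < ccDiam F ∧
    x = (volume F).toReal / (ccDiam F) ^ (2 * n + 2) }

/-- The isodiametric constant `C_{I,𝓡}` for the restricted problem in the class `𝓡`. -/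
def CIR (n : ℕ) : ℝ :=
  sSup { x : ℝ | ∃ F : Set (Heis n), RotInvariant F ∧ ccBounded F ∧ 0 < ccDiam F ∧
    x = (volume F).toReal / (ccDiam F) ^ (2 * n + 2) }

end Heis

namespace Heis
variable {n : ℕ}

lemma continuous_herm2 : Continuous fun zw : (EuclideanSpace ℂ (Fin n)) × (EuclideanSpace ℂ (Fin n)) => herm zw.1 zw.2 := by
  unfold herm
  exact continuous_finset_sum _ fun j _ =>
    (((PiLp.continuous_apply 2 _ j).comp continuous_fst).mul
      (Complex.continuous_conj.comp ((PiLp.continuous_apply 2 _ j).comp continuous_snd)))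

lemma HorizCurve.continuous_z (γ : HorizCurve n) : Continuous γ.z :=
  continuous_iff_continuousAt.2 fun u => (γ.hz u).continuousAt

/-- the speed of t -/
def HorizCurve.f (γ : HorizCurve n) (u : ℝ) : ℝ := 2 * (herm (γ.z u) (γ.z' u)).im

lemma HorizCurve.continuous_f (γ : HorizCurve n) : Continuous γ.f := by
  have : Continuous fun u => herm (γ.z u) (γ.z' u) :=
    continuous_herm2.comp (γ.continuous_z.prodMk γ.hz')
  exact (continuous_const.mul (Complex.continuous_im.comp this))

lemma HorizCurve.t_eq (γ : HorizCurve n) (u : ℝ) :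
    γ.t u = γ.t 0 + ∫ s in (0:ℝ)..u, γ.f s := by
  have : ∫ s in (0:ℝ)..u, γ.f s = γ.t u - γ.t 0 := by
    apply intervalIntegral.integral_eq_sub_of_hasDerivAt (fun s _ => γ.ht s)
    exact γ.continuous_f.intervalIntegrable _ _
  rw [this]; ring

lemma HorizCurve.length_nonneg (γ : HorizCurve n) : 0 ≤ γ.length :=
  intervalIntegral.integral_nonneg zero_le_one (fun u _ => norm_nonneg _)

lemma ccDist_bddBelow (p q : Heis n) : BddBelow { L : ℝ | ∃ γ : HorizCurve n, γ.z 0 = p.1 ∧ γ.t 0 = p.2 ∧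
      γ.z 1 = q.1 ∧ γ.t 1 = q.2 ∧ L = γ.length } :=
  ⟨0, fun L ⟨γ, _, _, _, _, hL⟩ => hL ▸ γ.length_nonneg⟩


lemma herm_add_left' (a b w : EuclideanSpace ℂ (Fin n)) : herm (a + b) w = herm a w + herm b w := by
  simp [herm, add_mul, Finset.sum_add_distrib]

lemma herm_add_right' (a w v : EuclideanSpace ℂ (Fin n)) : herm a (w + v) = herm a w + herm a v := by
  simp [herm, mul_add, Finset.sum_add_distrib]

lemma herm_smul_left' (s : ℝ) (a w : EuclideanSpace ℂ (Fin n)) : herm (s • a) w = s * herm a w := by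
  simp [herm, Finset.mul_sum, PiLp.smul_apply, Complex.real_smul, mul_assoc]

lemma herm_smul_right' (s : ℝ) (a w : EuclideanSpace ℂ (Fin n)) : herm a (s • w) = s * herm a w := by
  simp [herm, Finset.mul_sum, PiLp.smul_apply, Complex.real_smul, map_mul]
  congr 1; ext j; ring

lemma herm_self_im' (a : EuclideanSpace ℂ (Fin n)) : (herm a a).im = 0 := by
  simp [herm, Complex.im_sum, Complex.mul_conj]

lemma herm_expand (s : ℝ) (a d a' d' : EuclideanSpace ℂ (Fin n)) :
    herm (a + s • d) (a' + s • d') =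
      herm a a' + s * (herm a d' + herm d a') + s ^ 2 * herm d d' := by
  rw [herm_add_left', herm_add_right', herm_add_right', herm_smul_left', herm_smul_right',
    herm_smul_right', herm_smul_left']
  push_cast; ring

lemma lift_hasDerivAt {f : ℝ → ℝ} (hf : Continuous f) (c : ℝ) (u : ℝ) :
    HasDerivAt (fun v => c + ∫ s in (0:ℝ)..v, f s) (f u) u := by
  have := intervalIntegral.integral_hasDerivAt_right (f := f) (a := 0) (b := u)
    (hf.intervalIntegrable _ _) (hf.stronglyMeasurableAtFilter _ _) hf.continuousAt
  simpa using this.const_add c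

lemma combine (p q p₁ p₂ : Heis n) (hz12 : p₁.1 = p₂.1) (hq : q ∈ vseg p₁ p₂)
    (γ₁ γ₂ : HorizCurve n)
    (h10 : γ₁.z 0 = p.1) (h1t0 : γ₁.t 0 = p.2) (h11 : γ₁.z 1 = p₁.1) (h1t1 : γ₁.t 1 = p₁.2)
    (h20 : γ₂.z 0 = p.1) (h2t0 : γ₂.t 0 = p.2) (h21 : γ₂.z 1 = p₂.1) (h2t1 : γ₂.t 1 = p₂.2) :
    ∃ γ : HorizCurve n, γ.z 0 = p.1 ∧ γ.t 0 = p.2 ∧ γ.z 1 = q.1 ∧ γ.t 1 = q.2 ∧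
      γ.length ≤ max γ₁.length γ₂.length := by
  classical
  set d : ℝ → EuclideanSpace ℂ (Fin n) := fun u => γ₂.z u - γ₁.z u with hd
  set d' : ℝ → EuclideanSpace ℂ (Fin n) := fun u => γ₂.z' u - γ₁.z' u with hd'
  have hd_cont : Continuous d := γ₂.continuous_z.sub γ₁.continuous_z
  have hd'_cont : Continuous d' := γ₂.hz'.sub γ₁.hz'
  set g : ℝ → ℝ := fun u => 2 * ((herm (γ₁.z u) (d' u)).im + (herm (d u) (γ₁.z' u)).im) with hg
  set h : ℝ → ℝ := fun u => 2 * (herm (d u) (d' u)).im with hh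
  have hg_cont : Continuous g := by
    apply continuous_const.mul
    exact (Complex.continuous_im.comp (continuous_herm2.comp (γ₁.continuous_z.prodMk hd'_cont))).add
      (Complex.continuous_im.comp (continuous_herm2.comp (hd_cont.prodMk γ₁.hz')))
  have hh_cont : Continuous h :=
    continuous_const.mul (Complex.continuous_im.comp (continuous_herm2.comp (hd_cont.prodMk hd'_cont)))
  -- the interpolated curves
  set zs : ℝ → ℝ → EuclideanSpace ℂ (Fin n) := fun s u => γ₁.z u + s • d u with hzs
  set zs' : ℝ → ℝ → EuclideanSpace ℂ (Fin n) := fun s u => γ₁.z' u + s • d' u with hzs'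
  have hzs_deriv : ∀ s u, HasDerivAt (zs s) (zs' s u) u := fun s u =>
    (γ₁.hz u).add (((γ₂.hz u).sub (γ₁.hz u)).const_smul s)
  have hzs'_cont : ∀ s, Continuous (zs' s) := fun s =>
    γ₁.hz'.add (hd'_cont.const_smul s)
  set fs : ℝ → ℝ → ℝ := fun s u => 2 * (herm (zs s u) (zs' s u)).im with hfs
  have hfs_eq : ∀ s u, fs s u = γ₁.f u + s * g u + s ^ 2 * h u := by
    intro s u
    simp only [hfs, hzs, hzs', herm_expand, HorizCurve.f, hg, hh]
    simp [Complex.add_im, Complex.mul_im, ← Complex.ofReal_pow]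
    ring
  have hfs_cont : ∀ s, Continuous (fs s) := by
    intro s
    simp only [funext (hfs_eq s)]
    exact (γ₁.continuous_f.add (continuous_const.mul hg_cont)).add (continuous_const.mul hh_cont)
  -- the endpoint function
  set T : ℝ → ℝ := fun s => p.2 + ((∫ u in (0:ℝ)..1, γ₁.f u)
      + s * (∫ u in (0:ℝ)..1, g u) + s ^ 2 * (∫ u in (0:ℝ)..1, h u)) with hT
  have hT_int : ∀ s, T s = p.2 + ∫ u in (0:ℝ)..1, fs s u := by
    intro s
    rw [hT]
    congr 1
    have i1 : IntervalIntegrable γ₁.f volume 0 1 := γ₁.continuous_f.intervalIntegrable _ _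
    have i2 : IntervalIntegrable (fun u => s * g u) volume 0 1 :=
      (continuous_const.mul hg_cont).intervalIntegrable _ _
    have i3 : IntervalIntegrable (fun u => s ^ 2 * h u) volume 0 1 :=
      (continuous_const.mul hh_cont).intervalIntegrable _ _
    have e2 : (∫ u in (0:ℝ)..1, s * g u) = s * ∫ u in (0:ℝ)..1, g u :=
      intervalIntegral.integral_const_mul _ _
    have e3 : (∫ u in (0:ℝ)..1, s ^ 2 * h u) = s ^ 2 * ∫ u in (0:ℝ)..1, h u :=
      intervalIntegral.integral_const_mul _ _
    rw [funext (hfs_eq s), intervalIntegral.integral_add (i1.add i2) i3,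
      intervalIntegral.integral_add i1 i2, e2, e3]
  have hT_cont : Continuous T := by fun_prop
  have hT0 : T 0 = p₁.2 := by
    rw [hT_int 0, ← h1t1, γ₁.t_eq 1, h1t0]
    congr 1
    apply intervalIntegral.integral_congr
    intro u _
    simp [hfs, hzs, hzs', HorizCurve.f]
  have hT1 : T 1 = p₂.2 := by
    rw [hT_int 1, ← h2t1, γ₂.t_eq 1, h2t0]
    congr 1
    apply intervalIntegral.integral_congr
    intro u _
    simp [hfs, hzs, hzs', hd, hd', HorizCurve.f]
  -- IVT
  obtain ⟨hq1, hq2⟩ := hq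
  have : q.2 ∈ Set.uIcc (T 0) (T 1) := by rw [hT0, hT1]; exact hq2
  obtain ⟨s₀, hs₀mem, hs₀⟩ := intermediate_value_uIcc (hT_cont.continuousOn (s := Set.uIcc 0 1)) this
  rw [Set.uIcc_of_le (zero_le_one' ℝ)] at hs₀mem
  obtain ⟨hs₀0, hs₀1⟩ := hs₀mem
  refine ⟨⟨zs s₀, fun u => p.2 + ∫ s in (0:ℝ)..u, fs s₀ s, zs' s₀, hzs_deriv s₀,
    fun u => lift_hasDerivAt (hfs_cont s₀) p.2 u, hzs'_cont s₀⟩, ?_, ?_, ?_, ?_, ?_⟩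
  · show zs s₀ 0 = p.1
    simp [hzs, hd, h10, h20]
  · show p.2 + ∫ s in (0:ℝ)..0, fs s₀ s = p.2
    simp
  · show zs s₀ 1 = q.1
    simp [hzs, hd, h11, h21, ← hz12, hq1]
  · show p.2 + ∫ s in (0:ℝ)..1, fs s₀ s = q.2
    rw [← hT_int s₀, hs₀]
  · show (∫ u in (0:ℝ)..1, ‖zs' s₀ u‖) ≤ max γ₁.length γ₂.length
    have hb : ∀ u, ‖zs' s₀ u‖ ≤ (1 - s₀) * ‖γ₁.z' u‖ + s₀ * ‖γ₂.z' u‖ := by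
      intro u
      have : zs' s₀ u = (1 - s₀) • γ₁.z' u + s₀ • γ₂.z' u := by
        simp only [hzs', hd']
        module
      rw [this]
      refine (norm_add_le _ _).trans ?_
      rw [norm_smul, norm_smul, Real.norm_of_nonneg (by linarith), Real.norm_of_nonneg hs₀0]
    have hle : (∫ u in (0:ℝ)..1, ‖zs' s₀ u‖)
        ≤ ∫ u in (0:ℝ)..1, ((1 - s₀) * ‖γ₁.z' u‖ + s₀ * ‖γ₂.z' u‖) := by
      apply intervalIntegral.integral_mono_on zero_le_one
      · exact ((hzs'_cont s₀).norm).intervalIntegrable _ _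
      · exact ((continuous_const.mul γ₁.hz'.norm).add
          (continuous_const.mul γ₂.hz'.norm)).intervalIntegrable _ _
      · intro u _; exact hb u
    rw [intervalIntegral.integral_add (f := fun u => (1 - s₀) * ‖γ₁.z' u‖)
      (g := fun u => s₀ * ‖γ₂.z' u‖) ((continuous_const.mul γ₁.hz'.norm).intervalIntegrable _ _)
      ((continuous_const.mul γ₂.hz'.norm).intervalIntegrable _ _),
      intervalIntegral.integral_const_mul, intervalIntegral.integral_const_mul] at hle
    have m1 : γ₁.length ≤ max γ₁.length γ₂.length := le_max_left _ _
    have m2 : γ₂.length ≤ max γ₁.length γ₂.length := le_max_right _ _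
    have e1 : γ₁.length = ∫ u in (0:ℝ)..1, ‖γ₁.z' u‖ := rfl
    have e2 : γ₂.length = ∫ u in (0:ℝ)..1, ‖γ₂.z' u‖ := rfl
    rw [← e1, ← e2] at hle
    refine hle.trans ?_
    calc (1 - s₀) * γ₁.length + s₀ * γ₂.length
        ≤ (1 - s₀) * max γ₁.length γ₂.length + s₀ * max γ₁.length γ₂.length :=
          add_le_add (mul_le_mul_of_nonneg_left m1 (by linarith))
            (mul_le_mul_of_nonneg_left m2 hs₀0)
      _ = max γ₁.length γ₂.length := by ring


lemma herm_csmul_left (c : ℂ) (a w : EuclideanSpace ℂ (Fin n)) :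
    herm (c • a) w = c * herm a w := by
  simp [herm, Finset.mul_sum, PiLp.smul_apply, smul_eq_mul, mul_assoc]

lemma herm_csmul_right (c : ℂ) (a w : EuclideanSpace ℂ (Fin n)) :
    herm a (c • w) = (starRingEnd ℂ) c * herm a w := by
  simp only [herm, Finset.mul_sum, PiLp.smul_apply, smul_eq_mul, map_mul]
  exact Finset.sum_congr rfl fun j _ => by ring

lemma herm_single_right (hn : 0 < n) (a : EuclideanSpace ℂ (Fin n)) :
    herm a (EuclideanSpace.single (⟨0, hn⟩ : Fin n) (1:ℂ)) = a ⟨0, hn⟩ := by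
  simp [herm, EuclideanSpace.single_apply, apply_ite, Finset.sum_ite_eq']

-- derivative of smoothTransition
lemma st_hasDerivAt (x : ℝ) :
    HasDerivAt Real.smoothTransition (deriv Real.smoothTransition x) x :=
  (((Real.smoothTransition.contDiff (n := 1)).differentiable (by norm_num)) x).hasDerivAt

lemma st_deriv_continuous : Continuous (deriv Real.smoothTransition) :=
  (Real.smoothTransition.contDiff (n := 1)).continuous_deriv le_rfl

lemma st_deriv_nonpos {x : ℝ} (hx : x ≤ 0) : deriv Real.smoothTransition x = 0 := by
  have h1 : Set.EqOn (deriv Real.smoothTransition) (fun _ => (0:ℝ)) (Set.Iio 0) := by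
    intro y hy
    have hev : Real.smoothTransition =ᶠ[nhds y] fun _ => (0:ℝ) :=
      Filter.eventuallyEq_of_mem (Iio_mem_nhds hy) fun z hz =>
        Real.smoothTransition.zero_of_nonpos (le_of_lt hz)
    simpa using hev.deriv_eq
  have h2 := h1.closure st_deriv_continuous continuous_const
  rw [closure_Iio] at h2
  exact h2 hx

lemma st_deriv_one_le {x : ℝ} (hx : 1 ≤ x) : deriv Real.smoothTransition x = 0 := by
  have h1 : Set.EqOn (deriv Real.smoothTransition) (fun _ => (0:ℝ)) (Set.Ioi 1) := by
    intro y hy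
    have hev : Real.smoothTransition =ᶠ[nhds y] fun _ => (1:ℝ) :=
      Filter.eventuallyEq_of_mem (Ioi_mem_nhds hy) fun z hz =>
        Real.smoothTransition.one_of_one_le (le_of_lt hz)
    simpa using hev.deriv_eq
  have h2 := h1.closure st_deriv_continuous continuous_const
  rw [closure_Ioi] at h2
  exact h2 hx


set_option maxHeartbeats 1000000 in
lemma reach (hn : 0 < n) (p x : Heis n) :
    ∃ γ : HorizCurve n, γ.z 0 = p.1 ∧ γ.t 0 = p.2 ∧ γ.z 1 = x.1 ∧ γ.t 1 = x.2 := by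
  classical
  set j0 : Fin n := ⟨0, hn⟩ with hj0
  set e₀ : EuclideanSpace ℂ (Fin n) := EuclideanSpace.single j0 (1:ℂ) with he₀
  set b : EuclideanSpace ℂ (Fin n) := x.1 - p.1 with hb
  set T := Real.smoothTransition with hTdef
  set T' := deriv Real.smoothTransition with hT'def
  -- the ramp functions
  set φ : ℝ → ℝ := fun u => T (2 * u) with hφdef
  set φ' : ℝ → ℝ := fun u => T' (2 * u) * 2 with hφ'def
  set ψ : ℝ → ℝ := fun u => T (2 * u - 1) with hψdef
  set ψ' : ℝ → ℝ := fun u => T' (2 * u - 1) * 2 with hψ'def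
  have hφd : ∀ u, HasDerivAt φ (φ' u) u := by
    intro u
    have h2 : HasDerivAt (fun u : ℝ => 2 * u) 2 u := by
      simpa using (hasDerivAt_id u).const_mul (2:ℝ)
    exact (st_hasDerivAt (2 * u)).comp u h2
  have hψd : ∀ u, HasDerivAt ψ (ψ' u) u := by
    intro u
    have h2 : HasDerivAt (fun u : ℝ => 2 * u - 1) 2 u := by
      simpa using ((hasDerivAt_id u).const_mul (2:ℝ)).sub_const 1
    exact (st_hasDerivAt (2 * u - 1)).comp u h2
  have hφ'c : Continuous φ' := by
    exact ((st_deriv_continuous.comp (continuous_const.mul continuous_id)).mul continuous_const)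
  have hψ'c : Continuous ψ' := by
    exact ((st_deriv_continuous.comp ((continuous_const.mul continuous_id).sub
      continuous_const)).mul continuous_const)
  have hφ0 : φ 0 = 0 := by simp [hφdef, hTdef]
  have hφ_one : ∀ u : ℝ, (1:ℝ)/2 ≤ u → φ u = 1 := fun u hu =>
    Real.smoothTransition.one_of_one_le (by linarith)
  have hφ'_zero : ∀ u : ℝ, (1:ℝ)/2 ≤ u → φ' u = 0 := fun u hu => by
    simp [hφ'def, hT'def, st_deriv_one_le (show (1:ℝ) ≤ 2*u by linarith)]
  have hψ_zero : ∀ u : ℝ, u ≤ (1:ℝ)/2 → ψ u = 0 := fun u hu =>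
    Real.smoothTransition.zero_of_nonpos (by linarith)
  have hψ'_zero : ∀ u : ℝ, u ≤ (1:ℝ)/2 → ψ' u = 0 := fun u hu => by
    simp [hψ'def, hT'def, st_deriv_nonpos (show 2*u - 1 ≤ 0 by linarith)]
  have hψ1 : ψ 1 = 1 := by
    simpa [hψdef, hTdef] using Real.smoothTransition.one_of_one_le (le_of_eq (by norm_num))
  -- the loop data
  set c₁ : ℝ := (herm p.1 b).im with hc₁
  set Δ : ℝ := x.2 - p.2 - 2 * c₁ with hΔ
  set σ : ℝ := if Δ ≤ 0 then 1 else -1 with hσ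
  set r : ℝ := Real.sqrt (|Δ| / (4 * π)) with hr
  have hr2 : r ^ 2 = |Δ| / (4 * π) :=
    Real.sq_sqrt (div_nonneg (abs_nonneg _) (by positivity))
  set θ : ℝ → ℝ := fun u => σ * (2 * π) * ψ u with hθdef
  set θ' : ℝ → ℝ := fun u => σ * (2 * π) * ψ' u with hθ'def
  have hθd : ∀ u, HasDerivAt θ (θ' u) u := fun u => (hψd u).const_mul _
  have hθc : Continuous θ :=
    continuous_const.mul (Real.smoothTransition.continuous.comp (by fun_prop))
  have hθ'c : Continuous θ' := continuous_const.mul hψ'c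
  set w : ℝ → ℂ := fun u => (r:ℂ) * (Complex.exp ((θ u : ℂ) * Complex.I) - 1) with hwdef
  set w' : ℝ → ℂ := fun u =>
    (r:ℂ) * (Complex.exp ((θ u : ℂ) * Complex.I) * ((θ' u : ℂ) * Complex.I)) with hw'def
  have hwd : ∀ u, HasDerivAt w (w' u) u := by
    intro u
    have h1 : HasDerivAt (fun u => ((θ u : ℝ) : ℂ)) ((θ' u : ℂ)) u := (hθd u).ofReal_comp
    have h2 : HasDerivAt (fun u => ((θ u : ℂ) * Complex.I)) ((θ' u : ℂ) * Complex.I) u :=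
      h1.mul_const _
    exact ((h2.cexp.sub_const 1).const_mul _)
  have hwc : Continuous w := continuous_iff_continuousAt.2 fun u => (hwd u).continuousAt
  have hw'c : Continuous w' := by
    apply continuous_const.mul
    apply Continuous.mul
    · exact Complex.continuous_exp.comp ((Complex.continuous_ofReal.comp hθc).mul continuous_const)
    · exact (Complex.continuous_ofReal.comp hθ'c).mul continuous_const
  have hw_zero : ∀ u : ℝ, u ≤ (1:ℝ)/2 → w u = 0 := fun u hu => by
    simp [hwdef, hθdef, hψ_zero u hu]
  have hw'_zero : ∀ u : ℝ, u ≤ (1:ℝ)/2 → w' u = 0 := fun u hu => by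
    simp [hw'def, hθ'def, hψ'_zero u hu]
  -- the curve
  set z : ℝ → EuclideanSpace ℂ (Fin n) := fun u => p.1 + φ u • b + w u • e₀ with hzdef
  set z' : ℝ → EuclideanSpace ℂ (Fin n) := fun u => φ' u • b + w' u • e₀ with hz'def
  have hzd : ∀ u, HasDerivAt z (z' u) u := fun u =>
    (((hφd u).smul_const b).const_add p.1).add ((hwd u).smul_const e₀)
  have hzc : Continuous z := continuous_iff_continuousAt.2 fun u => (hzd u).continuousAt
  have hz'c : Continuous z' := (hφ'c.smul continuous_const).add (hw'c.smul continuous_const)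
  set f : ℝ → ℝ := fun u => 2 * (herm (z u) (z' u)).im with hfdef
  have hfc : Continuous f :=
    continuous_const.mul (Complex.continuous_im.comp (continuous_herm2.comp (hzc.prodMk hz'c)))
  set K : ℂ := p.1 j0 + b j0 with hK
  -- the antiderivative of f
  set F : ℝ → ℝ := fun u => 2 * (φ u * c₁) + 2 * ((w u).re * K.im - (w u).im * K.re)
      + 2 * (-(r ^ 2) * (θ u - Real.sin (θ u))) with hFdef
  have hFd : ∀ u, HasDerivAt F (f u) u := by
    intro u
    have hre : HasDerivAt (fun u => (w u).re) ((w' u).re) u :=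
      Complex.reCLM.hasFDerivAt.comp_hasDerivAt u (hwd u)
    have him : HasDerivAt (fun u => (w u).im) ((w' u).im) u :=
      Complex.imCLM.hasFDerivAt.comp_hasDerivAt u (hwd u)
    have hD : HasDerivAt F (2 * (φ' u * c₁) + 2 * ((w' u).re * K.im - (w' u).im * K.re)
        + 2 * (-(r ^ 2) * (θ' u - Real.cos (θ u) * θ' u))) u := by
      exact ((((hφd u).mul_const c₁).const_mul 2).add
        (((hre.mul_const K.im).sub (him.mul_const K.re)).const_mul 2)).add
        ((((hθd u).sub (hθd u).sin).const_mul (-(r ^ 2))).const_mul 2)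
    convert hD using 1
    -- the pointwise identity f u = F' u
    rcases le_total u ((1:ℝ)/2) with hu | hu
    · -- w ≡ 0 region
      have e1 : z u = p.1 + φ u • b := by
        simp only [hzdef]; rw [hw_zero u hu]; simp
      have e2 : z' u = φ' u • b := by
        simp only [hz'def]; rw [hw'_zero u hu]; simp
      have hθ'0 : θ' u = 0 := by simp only [hθ'def]; rw [hψ'_zero u hu]; ring
      simp only [hfdef, e1, e2, herm_add_left', herm_smul_left', herm_smul_right']
      rw [hw'_zero u hu, hθ'0]
      simp only [Complex.im_ofReal_mul, Complex.add_im, herm_self_im', hc₁,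
        Complex.zero_re, Complex.zero_im]
      ring
    · -- φ ≡ 1 region
      have e1 : z u = (p.1 + b) + w u • e₀ := by
        simp only [hzdef]; rw [hφ_one u hu]; module
      have e2 : z' u = w' u • e₀ := by
        simp only [hz'def]; rw [hφ'_zero u hu]; simp
      have hbj : herm (p.1 + b + w u • e₀) e₀ = K + w u := by
        rw [herm_add_left', herm_add_left', herm_csmul_left]
        simp only [he₀, hj0, herm_single_right hn]
        have : (EuclideanSpace.single (⟨0, hn⟩ : Fin n) (1:ℂ)) ⟨0, hn⟩ = 1 := by
          simp [EuclideanSpace.single_apply]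
        rw [this, mul_one, hK, hj0]
      simp only [hfdef, e1, e2, herm_csmul_right, hbj]
      rw [hφ'_zero u hu]
      -- now pure complex arithmetic
      simp only [hwdef, hw'def, Complex.exp_mul_I, map_mul, map_sub, map_add, map_one,
        Complex.conj_ofReal, Complex.conj_I, ← Complex.ofReal_cos, ← Complex.ofReal_sin]
      simp only [Complex.mul_re, Complex.mul_im, Complex.add_re, Complex.add_im,
        Complex.sub_re, Complex.sub_im, Complex.one_re, Complex.one_im, Complex.I_re,
        Complex.I_im, Complex.ofReal_re, Complex.ofReal_im, Complex.neg_re, Complex.neg_im]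
      ring_nf
      linear_combination (-(8 * r ^ 2 * σ * π * T' (2 * u - 1))) * Real.sin_sq_add_cos_sq (θ u)
  refine ⟨⟨z, fun u => p.2 + ∫ s in (0:ℝ)..u, f s, z', hzd,
    fun u => lift_hasDerivAt hfc p.2 u, hz'c⟩, ?_, ?_, ?_, ?_⟩
  · show z 0 = p.1
    simp only [hzdef]
    rw [hφ0, hw_zero 0 (by norm_num)]
    simp
  · show p.2 + ∫ s in (0:ℝ)..0, f s = p.2
    simp
  · show z 1 = x.1
    have hθ1 : θ 1 = σ * (2 * π) := by rw [hθdef]; simp [hψ1]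
    have hw1 : w 1 = 0 := by
      simp only [hwdef]
      rw [hθ1]
      have : Complex.exp ((↑(σ * (2 * π)) : ℂ) * Complex.I) = 1 := by
        rcases le_or_gt Δ 0 with h | h
        · rw [hσ, if_pos h]
          push_cast
          rw [show ((1:ℂ) * (2 * π) * Complex.I) = 2 * π * Complex.I by ring]
          exact Complex.exp_two_pi_mul_I
        · rw [hσ, if_neg (not_le.2 h)]
          push_cast
          rw [show ((-1:ℂ) * (2 * π) * Complex.I) = -(2 * π * Complex.I) by ring,
            Complex.exp_neg, Complex.exp_two_pi_mul_I, inv_one]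
      rw [this]; simp
    simp only [hzdef]
    rw [hφ_one 1 (by norm_num), hw1, hb]
    simp
  · show p.2 + ∫ s in (0:ℝ)..1, f s = x.2
    have hFTC : ∫ s in (0:ℝ)..1, f s = F 1 - F 0 :=
      intervalIntegral.integral_eq_sub_of_hasDerivAt (fun u _ => hFd u)
        (hfc.intervalIntegrable _ _)
    have hθ1 : θ 1 = σ * (2 * π) := by rw [hθdef]; simp [hψ1]
    have hθ0 : θ 0 = 0 := by rw [hθdef]; simp [hψ_zero 0 (by norm_num)]
    have hw1 : w 1 = 0 := by
      simp only [hwdef]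
      rw [hθ1]
      have : Complex.exp ((↑(σ * (2 * π)) : ℂ) * Complex.I) = 1 := by
        rcases le_or_gt Δ 0 with h | h
        · rw [hσ, if_pos h]
          push_cast
          rw [show ((1:ℂ) * (2 * π) * Complex.I) = 2 * π * Complex.I by ring]
          exact Complex.exp_two_pi_mul_I
        · rw [hσ, if_neg (not_le.2 h)]
          push_cast
          rw [show ((-1:ℂ) * (2 * π) * Complex.I) = -(2 * π * Complex.I) by ring,
            Complex.exp_neg, Complex.exp_two_pi_mul_I, inv_one]
      rw [this]; simp
    have hsin1 : Real.sin (θ 1) = 0 := by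
      rw [hθ1]
      rcases le_or_gt Δ 0 with h | h
      · rw [hσ, if_pos h]; simpa using Real.sin_two_pi
      · rw [hσ, if_neg (not_le.2 h)]
        rw [show (-1 : ℝ) * (2 * π) = -(2 * π) by ring, Real.sin_neg, Real.sin_two_pi, neg_zero]
    have hF0 : F 0 = 0 := by
      simp only [hFdef]
      rw [hφ0, hw_zero 0 (by norm_num), hθ0]
      simp
    have hF1 : F 1 = 2 * c₁ - σ * |Δ| := by
      simp only [hFdef]
      rw [hφ_one 1 (by norm_num), hw1, hsin1, hθ1, hr2]
      have hπ : (π : ℝ) ≠ 0 := Real.pi_ne_zero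
      field_simp
      simp only [Complex.zero_re, Complex.zero_im]
      ring
    rw [hFTC, hF0, hF1]
    rcases le_or_gt Δ 0 with h | h
    · rw [hσ, if_pos h, abs_of_nonpos h]
      rw [hΔ, hc₁, hb]
      ring
    · rw [hσ, if_neg (not_le.2 h), abs_of_pos h]
      rw [hΔ, hc₁, hb]
      ring


lemma ccDist_dim_zero (p q : Heis 0) : ccDist p q = 0 := by
  set S := { L : ℝ | ∃ γ : HorizCurve 0, γ.z 0 = p.1 ∧ γ.t 0 = p.2 ∧
      γ.z 1 = q.1 ∧ γ.t 1 = q.2 ∧ L = γ.length } with hS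
  have hzero : ∀ L ∈ S, L = 0 := by
    rintro L ⟨γ, -, -, -, -, rfl⟩
    have : ∀ u : ℝ, ‖γ.z' u‖ = 0 := fun u => by
      simp [EuclideanSpace.norm_eq]
    simp [HorizCurve.length, this]
  by_cases hne : S.Nonempty
  · obtain ⟨L, hL⟩ := hne
    refine le_antisymm ?_ ?_
    · have h0 : (0:ℝ) ∈ S := by rw [← hzero L hL]; exact hL
      exact csInf_le (ccDist_bddBelow p q) h0
    · exact le_csInf ⟨L, hL⟩ fun b hb => (hzero b hb).ge
  · rw [Set.not_nonempty_iff_eq_empty] at hne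
    show sInf S = 0
    rw [hne, Real.sInf_empty]

end Heis

/-- For any `p` and any `p₁, p₂` with `z_{p₁} = z_{p₂}`, every point `q` on the vertical
segment joining `p₁` to `p₂` satisfies `d(p,q) ≤ max (d(p,p₁)) (d(p,p₂))`. -/
theorem stmt9 (n : ℕ) (p p₁ p₂ : Heis n) (hz : p₁.1 = p₂.1) :
    ∀ q ∈ Heis.vseg p₁ p₂,
      Heis.ccDist p q ≤ max (Heis.ccDist p p₁) (Heis.ccDist p p₂) := by
  intro q hq
  rcases Nat.eq_zero_or_pos n with rfl | hn
  · rw [Heis.ccDist_dim_zero, Heis.ccDist_dim_zero, Heis.ccDist_dim_zero]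
    norm_num
  · set S : Heis n → Set ℝ := fun x => { L : ℝ | ∃ γ : Heis.HorizCurve n, γ.z 0 = p.1 ∧
      γ.t 0 = p.2 ∧ γ.z 1 = x.1 ∧ γ.t 1 = x.2 ∧ L = γ.length } with hSdef
    have hSne : ∀ x, (S x).Nonempty := by
      intro x
      obtain ⟨γ, h1, h2, h3, h4⟩ := Heis.reach hn p x
      exact ⟨γ.length, γ, h1, h2, h3, h4, rfl⟩
    have hbdd : ∀ x, BddBelow (S x) := fun x => Heis.ccDist_bddBelow p x
    have key : ∀ ε > 0, Heis.ccDist p q ≤ max (Heis.ccDist p p₁) (Heis.ccDist p p₂) + ε := by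
      intro ε hε
      obtain ⟨L₁, hL₁mem, hL₁⟩ := exists_lt_of_csInf_lt (hSne p₁)
        (lt_add_of_pos_right (sInf (S p₁)) hε)
      obtain ⟨L₂, hL₂mem, hL₂⟩ := exists_lt_of_csInf_lt (hSne p₂)
        (lt_add_of_pos_right (sInf (S p₂)) hε)
      obtain ⟨γ₁, h10, h1t0, h11, h1t1, hL₁len⟩ := hL₁mem
      obtain ⟨γ₂, h20, h2t0, h21, h2t1, hL₂len⟩ := hL₂mem
      obtain ⟨γ, hg0, hgt0, hg1, hgt1, hglen⟩ :=
        Heis.combine p q p₁ p₂ hz hq γ₁ γ₂ h10 h1t0 h11 h1t1 h20 h2t0 h21 h2t1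
      have h1 : Heis.ccDist p q ≤ γ.length :=
        csInf_le (hbdd q) ⟨γ, hg0, hgt0, hg1, hgt1, rfl⟩
      have d1 : Heis.ccDist p p₁ = sInf (S p₁) := rfl
      have d2 : Heis.ccDist p p₂ = sInf (S p₂) := rfl
      refine h1.trans (hglen.trans ?_)
      rw [d1, d2]
      rw [hL₁len] at hL₁
      rw [hL₂len] at hL₂
      apply max_le
      · exact (le_of_lt hL₁).trans (add_le_add_left (le_max_left _ _) ε)
      · exact (le_of_lt hL₂).trans (add_le_add_left (le_max_right _ _) ε)
    exact le_of_forall_pos_le_add key
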